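/- arXiv:2109.06310 — 3 statements merged into one kernel-verified Lean document; each statement's English description precedes it below -/
import Mathlib

section
/- In a finite-horizon MDP with finite state and action spaces, let π_e and π_b be policies and θ : S → {0,1} a mapping such that for every state s with θ(s)=0 the state-action value function Q^{π_e}(s,·) is constant in the action. Then the composite policy π'(a|s) = π_e(a|s) when θ(s)=1 and π_b(a|s) when θ(s)=0 satisfies V^{π'}(s) = V^{π_e}(s) for every state s. -/
private lemma wsum_abs_le {ι : Type*} [Fintype ι] (w x : ι → ℝ)
    (hw0 : ∀ i, 0 ≤ w i) (hw1 : ∑ i, w i = 1) (M : ℝ) (hx : ∀ i, |x i| ≤ M) :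
    |∑ i, w i * x i| ≤ M := by
  calc |∑ i, w i * x i| ≤ ∑ i, |w i * x i| := Finset.abs_sum_le_sum_abs _ _
    _ ≤ ∑ i, w i * M := Finset.sum_le_sum (fun i _ => by
        rw [abs_mul, abs_of_nonneg (hw0 i)]
        exact mul_le_mul_of_nonneg_left (hx i) (hw0 i))
    _ = M := by rw [← Finset.sum_mul, hw1, one_mul]

/-- Composite-policy value equality in a discounted MDP: if the Bellman value
functions `Ve` (for `π_e`) and `V'` (for the composite policy) satisfy their Bellman
equations, and the state-action value `Q^{π_e}(s,·)` is constant in the action for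
every irrelevant state (`θ s = false`), then `V' = Ve` everywhere. -/
theorem composite_policy_value_eq {S A : Type*} [Fintype S] [Fintype A]
    [Nonempty S] [Nonempty A]
    (P : S → A → S → ℝ) (R : S → A → ℝ) (γ : ℝ) (hγ0 : 0 ≤ γ) (hγ1 : γ < 1)
    (hP0 : ∀ s a s', 0 ≤ P s a s') (hP1 : ∀ s a, ∑ s', P s a s' = 1)
    (πe πb : S → A → ℝ)
    (hπe0 : ∀ s a, 0 ≤ πe s a) (hπe1 : ∀ s, ∑ a, πe s a = 1)
    (hπb0 : ∀ s a, 0 ≤ πb s a) (hπb1 : ∀ s, ∑ a, πb s a = 1)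
    (θ : S → Bool) (Ve V' : S → ℝ)
    (hVe : ∀ s, Ve s = ∑ a, πe s a * (R s a + γ * ∑ s', P s a s' * Ve s'))
    (hV' : ∀ s, V' s = ∑ a, (if θ s then πe s a else πb s a) *
        (R s a + γ * ∑ s', P s a s' * V' s'))
    (hconst : ∀ s, θ s = false → ∀ a a',
        (R s a + γ * ∑ s', P s a s' * Ve s')
          = (R s a' + γ * ∑ s', P s a' s' * Ve s')) :
    ∀ s, V' s = Ve s := by
  set π' : S → A → ℝ := fun s a => if θ s then πe s a else πb s a with hπ'
  have hπ'0 : ∀ s a, 0 ≤ π' s a := fun s a => by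
    by_cases h : θ s <;> simp [hπ', h, hπe0, hπb0]
  have hπ'1 : ∀ s, ∑ a, π' s a = 1 := fun s => by
    by_cases h : θ s <;> simp [hπ', h, hπe1, hπb1]
  -- Ve also satisfies the Bellman equation for the composite policy
  have hVe' : ∀ s, Ve s = ∑ a, π' s a * (R s a + γ * ∑ s', P s a s' * Ve s') := by
    intro s
    by_cases h : θ s
    · simpa [hπ', h] using hVe s
    · have hθ : θ s = false := by simpa using h
      obtain ⟨a₀⟩ := ‹Nonempty A›
      have h1 : ∑ a, πe s a * (R s a + γ * ∑ s', P s a s' * Ve s')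
          = (R s a₀ + γ * ∑ s', P s a₀ s' * Ve s') := by
        rw [Finset.sum_congr rfl (fun a _ => by rw [hconst s hθ a a₀]),
          ← Finset.sum_mul, hπe1, one_mul]
      have h2 : ∑ a, πb s a * (R s a + γ * ∑ s', P s a s' * Ve s')
          = (R s a₀ + γ * ∑ s', P s a₀ s' * Ve s') := by
        rw [Finset.sum_congr rfl (fun a _ => by rw [hconst s hθ a a₀]),
          ← Finset.sum_mul, hπb1, one_mul]
      rw [hVe s, h1]
      simp [hπ', hθ, h2]
  -- the difference satisfies a contracted Bellman-like equation
  have hD : ∀ s, V' s - Ve s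
      = γ * ∑ a, π' s a * ∑ s', P s a s' * (V' s' - Ve s') := by
    intro s
    rw [hV' s, hVe' s, ← Finset.sum_sub_distrib, Finset.mul_sum]
    refine Finset.sum_congr rfl (fun a _ => ?_)
    have : ∑ s', P s a s' * (V' s' - Ve s')
        = (∑ s', P s a s' * V' s') - ∑ s', P s a s' * Ve s' := by
      rw [← Finset.sum_sub_distrib]
      exact Finset.sum_congr rfl (fun s' _ => by ring)
    rw [this]; ring
  obtain ⟨s₀, -, hs₀⟩ := Finset.exists_max_image Finset.univ
    (fun s => |V' s - Ve s|) Finset.univ_nonempty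
  have hbound : ∀ s, |V' s - Ve s| ≤ γ * |V' s₀ - Ve s₀| := by
    intro s
    rw [hD s, abs_mul, abs_of_nonneg hγ0]
    refine mul_le_mul_of_nonneg_left ?_ hγ0
    refine wsum_abs_le _ _ (hπ'0 s) (hπ'1 s) _ (fun a => ?_)
    exact wsum_abs_le _ _ (hP0 s a) (hP1 s a) _ (fun s' => hs₀ s' (Finset.mem_univ _))
  have h0 : |V' s₀ - Ve s₀| = 0 := by
    have := hbound s₀
    nlinarith [abs_nonneg (V' s₀ - Ve s₀)]
  intro s
  have h1 : |V' s - Ve s| ≤ 0 := by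
    have h := hbound s; rw [h0, mul_zero] at h; exact h
  exact sub_eq_zero.mp (abs_eq_zero.mp (le_antisymm h1 (abs_nonneg _)))
end

section
/- Let τ = (s_1, a_1, ..., s_T, a_T) be a trajectory of fixed length T in a finite MDP sampled under behavior policy π_b, i.e., with joint probability P(s_1) Π_t π_b(a_t|s_t) P(s_{t+1}|s_t,a_t), and assume π_b(a|s) > 0 for all (s,a). For any mapping θ' : S → {0,1}, the expectation under π_b of the product over t of (π_e(a_t|s_t)/π_b(a_t|s_t))^{1−θ'(s_t)} equals 1. -/
open Finset

/-- The joint probability of a length-`T` trajectory under policy `π`. -/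
def trajProb {S A : Type*} (init : S → ℝ) (P : S → A → S → ℝ) (π : S → A → ℝ)
    (T : ℕ) (s : Fin (T + 1) → S) (a : Fin T → A) : ℝ :=
  init (s 0) * ∏ t : Fin T, π (s t.castSucc) (a t) * P (s t.castSucc) (a t) (s t.succ)

lemma sum_snoc_aux {β : Type*} [Fintype β] {n : ℕ} (g : (Fin (n + 1) → β) → ℝ) :
    ∑ f : Fin (n + 1) → β, g f = ∑ x : β, ∑ f : Fin n → β, g (Fin.snoc f x) := by
  calc ∑ f : Fin (n + 1) → β, g f
      = ∑ p : β × (Fin n → β), g (Fin.snoc p.2 p.1) :=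
        (Fintype.sum_equiv (Fin.snocEquiv (fun _ => β)) _ _ (fun p => rfl)).symm
    _ = _ := Fintype.sum_prod_type _

lemma sum_trajProb_eq_one {S A : Type*} [Fintype S] [Fintype A] (T : ℕ)
    (init : S → ℝ) (hinit1 : ∑ s, init s = 1)
    (P : S → A → S → ℝ) (hP1 : ∀ s a, ∑ s', P s a s' = 1)
    (π : S → A → ℝ) (hπ1 : ∀ s, ∑ a, π s a = 1) :
    ∑ s : Fin (T + 1) → S, ∑ a : Fin T → A, trajProb init P π T s a = 1 := by
  induction T with
  | zero =>
    simp only [trajProb, Finset.univ_eq_empty, Finset.prod_empty, mul_one,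
      Finset.sum_const, Finset.card_univ, Fintype.card_fun]
    rw [← hinit1]
    exact Fintype.sum_equiv (Equiv.funUnique (Fin 1) S) _ _ (fun f => by
      simp [Equiv.funUnique])
  | succ T ih =>
    rw [sum_snoc_aux (fun s => ∑ a : Fin (T+1) → A, trajProb init P π (T+1) s a)]
    have key : ∀ (x : S) (s : Fin (T+1) → S),
        ∑ a : Fin (T+1) → A, trajProb init P π (T+1) (Fin.snoc s x) a
          = (∑ a : Fin T → A, trajProb init P π T s a)
              * (∑ y : A, π (s (Fin.last T)) y * P (s (Fin.last T)) y x) := by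
      intro x s
      rw [sum_snoc_aux (fun a => trajProb init P π (T+1) (Fin.snoc s x) a)]
      rw [Finset.sum_comm, Finset.sum_mul]
      refine Finset.sum_congr rfl fun a _ => ?_
      rw [Finset.mul_sum]
      refine Finset.sum_congr rfl fun y _ => ?_
      unfold trajProb
      rw [Fin.prod_univ_castSucc]
      have h0 : (Fin.snoc s x : Fin (T+2) → S) 0 = s 0 := by
        have : (0 : Fin (T+2)) = Fin.castSucc 0 := rfl
        rw [this, Fin.snoc_castSucc]
      rw [h0]
      have hprod : ∀ t : Fin T,
          π ((Fin.snoc s x : Fin (T+2) → S) (Fin.castSucc (Fin.castSucc t)))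
              ((Fin.snoc a y : Fin (T+1) → A) (Fin.castSucc t)) *
            P ((Fin.snoc s x : Fin (T+2) → S) (Fin.castSucc (Fin.castSucc t)))
              ((Fin.snoc a y : Fin (T+1) → A) (Fin.castSucc t))
              ((Fin.snoc s x : Fin (T+2) → S) (Fin.succ (Fin.castSucc t)))
          = π (s (Fin.castSucc t)) (a t) * P (s (Fin.castSucc t)) (a t) (s (Fin.succ t)) := by
        intro t
        rw [Fin.succ_castSucc, Fin.snoc_castSucc, Fin.snoc_castSucc, Fin.snoc_castSucc]
      rw [Finset.prod_congr rfl (fun t _ => hprod t)]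
      rw [Fin.snoc_castSucc, Fin.snoc_last, Fin.succ_last, Fin.snoc_last]
      ring
    calc ∑ x : S, ∑ s : Fin (T+1) → S, ∑ a : Fin (T+1) → A,
            trajProb init P π (T+1) (Fin.snoc s x) a
        = ∑ s : Fin (T+1) → S, (∑ a : Fin T → A, trajProb init P π T s a)
            * ∑ x : S, ∑ y : A, π (s (Fin.last T)) y * P (s (Fin.last T)) y x := by
          rw [Finset.sum_comm]
          refine Finset.sum_congr rfl fun s _ => ?_
          rw [Finset.mul_sum]
          exact Finset.sum_congr rfl fun x _ => key x s
      _ = 1 := by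
          have hlast : ∀ s₀ : S, ∑ x : S, ∑ y : A, π s₀ y * P s₀ y x = 1 := by
            intro s₀
            rw [Finset.sum_comm]
            calc ∑ y : A, ∑ x : S, π s₀ y * P s₀ y x
                = ∑ y : A, π s₀ y * ∑ x : S, P s₀ y x := by
                  exact Finset.sum_congr rfl fun y _ => (Finset.mul_sum _ _ _).symm
              _ = 1 := by simp only [hP1, mul_one]; exact hπ1 s₀
          simp only [hlast, mul_one]
          exact ih

/-- The expectation under `π_b` of the product of omitted likelihood ratios
(those with exponent `1 - θ'(s_t)`, i.e. the ratio is included exactly when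
`θ'(s_t) = 0`) equals 1. -/
theorem expectation_omitted_ratios_eq_one {S A : Type*} [Fintype S] [Fintype A]
    [Nonempty S] [Nonempty A] (T : ℕ)
    (init : S → ℝ) (hinit0 : ∀ s, 0 ≤ init s) (hinit1 : ∑ s, init s = 1)
    (P : S → A → S → ℝ) (hP0 : ∀ s a s', 0 ≤ P s a s') (hP1 : ∀ s a, ∑ s', P s a s' = 1)
    (πe πb : S → A → ℝ)
    (hπe0 : ∀ s a, 0 ≤ πe s a) (hπe1 : ∀ s, ∑ a, πe s a = 1)
    (hπb0 : ∀ s a, 0 < πb s a) (hπb1 : ∀ s, ∑ a, πb s a = 1)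
    (θ' : S → Bool) :
    ∑ s : Fin (T + 1) → S, ∑ a : Fin T → A,
        trajProb init P πb T s a *
          ∏ t : Fin T,
            (if θ' (s t.castSucc) then 1
             else πe (s t.castSucc) (a t) / πb (s t.castSucc) (a t))
      = 1 := by
  set π' : S → A → ℝ := fun s a => if θ' s then πb s a else πe s a with hπ'
  have hπ'1 : ∀ s, ∑ a, π' s a = 1 := by
    intro s
    by_cases h : θ' s <;> simp [hπ', h, hπb1 s, hπe1 s]
  have hmain : ∀ (s : Fin (T+1) → S) (a : Fin T → A),
      trajProb init P πb T s a *
        ∏ t : Fin T,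
          (if θ' (s t.castSucc) then 1
           else πe (s t.castSucc) (a t) / πb (s t.castSucc) (a t))
      = trajProb init P π' T s a := by
    intro s a
    unfold trajProb
    rw [mul_assoc, ← Finset.prod_mul_distrib]
    congr 1
    refine Finset.prod_congr rfl fun t _ => ?_
    by_cases h : θ' (s t.castSucc)
    · simp [hπ', h]
    · simp only [hπ', h, Bool.false_eq_true, if_false]
      have hb : πb (s t.castSucc) (a t) ≠ 0 := (hπb0 _ _).ne'
      field_simp
  calc ∑ s : Fin (T + 1) → S, ∑ a : Fin T → A,
        trajProb init P πb T s a *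
          ∏ t : Fin T,
            (if θ' (s t.castSucc) then 1
             else πe (s t.castSucc) (a t) / πb (s t.castSucc) (a t))
      = ∑ s : Fin (T + 1) → S, ∑ a : Fin T → A, trajProb init P π' T s a := by
        exact Finset.sum_congr rfl fun s _ => Finset.sum_congr rfl fun a _ => hmain s a
    _ = 1 := sum_trajProb_eq_one T init hinit1 P hP1 π' hπ'1
end

section
/- In a finite MDP with fixed horizon T and true relevance mapping θ (θ(s)=0 implies Q^{π_e}(s,·) is constant in the action), the OSIRIS estimator E_{τ∼π_b}[g(τ) Π_t ρ_t(τ)^{θ(s_t)}] equals V^{π_e}, where g(τ) is the sum of rewards along τ and ρ_t(τ) = π_e(a_t|s_t)/π_b(a_t|s_t). -/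
open Finset

/-- Value of state `s` under policy `π` with `k` steps remaining (undiscounted). -/
def Vrem {S A : Type*} [Fintype S] [Fintype A]
    (π : S → A → ℝ) (P : S → A → S → ℝ) (R : S → A → ℝ) : ℕ → S → ℝ
  | 0, _ => 0
  | k + 1, s => ∑ a, π s a * (R s a + ∑ s', P s a s' * Vrem π P R k s')

/-- Expected return-to-go after taking action `a` in state `s` with `k` further steps
remaining afterwards (`Q^{π}` with finite horizon). -/
def Qrem {S A : Type*} [Fintype S] [Fintype A]
    (π : S → A → ℝ) (P : S → A → S → ℝ) (R : S → A → ℝ) (k : ℕ) (s : S) (a : A) : ℝ :=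
  R s a + ∑ s', P s a s' * Vrem π P R k s'

lemma sum_pi_fin_succ {β : Type*} {M : Type*} [Fintype β] [AddCommMonoid M] (n : ℕ)
    (F : (Fin (n + 1) → β) → M) :
    ∑ f : Fin (n + 1) → β, F f = ∑ x : β, ∑ f : Fin n → β, F (Fin.cons x f) := by
  calc ∑ f : Fin (n + 1) → β, F f
      = ∑ p : β × (Fin n → β), F (Fin.cons p.1 p.2) :=
        (Fintype.sum_equiv (Fin.consEquiv fun _ => β) _ _ (fun p => rfl)).symm
    _ = _ := Fintype.sum_prod_type _

lemma trajProb_cons {S A : Type*} (init : S → ℝ) (P : S → A → S → ℝ) (π : S → A → ℝ)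
    (T : ℕ) (s0 : S) (a0 : A) (s : Fin (T + 1) → S) (a : Fin T → A) :
    trajProb init P π (T + 1) (Fin.cons s0 s) (Fin.cons a0 a)
      = init s0 * (π s0 a0 * trajProb (P s0 a0) P π T s a) := by
  unfold trajProb
  rw [Fin.prod_univ_succ]
  have h0 : (Fin.cons s0 s : Fin (T + 2) → S) ((0 : Fin (T + 1)).castSucc) = s0 := by simp
  have hsucc : ∀ t : Fin T,
      (Fin.cons s0 s : Fin (T + 2) → S) ((t.succ : Fin (T + 1)).castSucc) = s t.castSucc := by
    intro t; rw [← Fin.succ_castSucc]; exact Fin.cons_succ _ _ _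
  have hsucc2 : ∀ t : Fin T,
      (Fin.cons s0 s : Fin (T + 2) → S) ((t.succ : Fin (T + 1)).succ) = s t.succ := by
    intro t; exact Fin.cons_succ _ _ _
  have h1 : (Fin.cons s0 s : Fin (T + 2) → S) ((0 : Fin (T + 1)).succ) = s 0 :=
    Fin.cons_succ _ _ _
  simp only [Fin.cons_zero, Fin.cons_succ, h0, hsucc, hsucc2, h1]
  ring

lemma reward_cons {S A : Type*} (R : S → A → ℝ) (T : ℕ) (s0 : S) (a0 : A)
    (s : Fin (T + 1) → S) (a : Fin T → A) :
    (∑ t : Fin (T + 1), R ((Fin.cons s0 s : Fin (T + 2) → S) t.castSucc)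
        ((Fin.cons a0 a : Fin (T + 1) → A) t))
      = R s0 a0 + ∑ t : Fin T, R (s t.castSucc) (a t) := by
  rw [Fin.sum_univ_succ]
  simp only [Fin.castSucc_zero, Fin.cons_zero, ← Fin.succ_castSucc, Fin.cons_succ]

lemma traj_mass {S A : Type*} [Fintype S] [Fintype A]
    (P : S → A → S → ℝ) (hP1 : ∀ s a, ∑ s', P s a s' = 1)
    (π : S → A → ℝ) (hπ1 : ∀ s, ∑ a, π s a = 1) :
    ∀ (T : ℕ) (init : S → ℝ),
      ∑ s : Fin (T + 1) → S, ∑ a : Fin T → A, trajProb init P π T s a = ∑ s0, init s0 := by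
  intro T
  induction T with
  | zero =>
    intro init
    rw [sum_pi_fin_succ]
    apply Finset.sum_congr rfl
    intro s0 _
    simp [trajProb]
  | succ T ih =>
    intro init
    rw [sum_pi_fin_succ]
    apply Finset.sum_congr rfl
    intro s0 _
    have step : ∀ s' : Fin (T + 1) → S,
        ∑ a : Fin (T + 1) → A, trajProb init P π (T + 1) (Fin.cons s0 s') a
          = ∑ a0 : A, ∑ a' : Fin T → A, init s0 * (π s0 a0 * trajProb (P s0 a0) P π T s' a') := by
      intro s'
      rw [sum_pi_fin_succ]
      simp only [trajProb_cons]
    simp only [step]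
    rw [Finset.sum_comm]
    have hinner : ∀ a0 : A,
        (∑ s' : Fin (T + 1) → S, ∑ a' : Fin T → A,
            init s0 * (π s0 a0 * trajProb (P s0 a0) P π T s' a'))
          = init s0 * π s0 a0 := by
      intro a0
      simp only [← Finset.mul_sum]
      rw [ih (P s0 a0), hP1, mul_one]
    rw [Finset.sum_congr rfl (fun a0 _ => hinner a0), ← Finset.mul_sum, hπ1, mul_one]

lemma traj_exp {S A : Type*} [Fintype S] [Fintype A]
    (P : S → A → S → ℝ) (hP1 : ∀ s a, ∑ s', P s a s' = 1)
    (π : S → A → ℝ) (hπ1 : ∀ s, ∑ a, π s a = 1) (R : S → A → ℝ) :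
    ∀ (T : ℕ) (init : S → ℝ),
      ∑ s : Fin (T + 1) → S, ∑ a : Fin T → A,
          trajProb init P π T s a * ∑ t : Fin T, R (s t.castSucc) (a t)
        = ∑ s0, init s0 * Vrem π P R T s0 := by
  intro T
  induction T with
  | zero => intro init; simp [Vrem]
  | succ T ih =>
    intro init
    rw [sum_pi_fin_succ]
    apply Finset.sum_congr rfl
    intro s0 _
    have step : ∀ s' : Fin (T + 1) → S,
        (∑ a : Fin (T + 1) → A, trajProb init P π (T + 1) (Fin.cons s0 s') a *
            ∑ t : Fin (T + 1), R ((Fin.cons s0 s' : Fin (T + 2) → S) t.castSucc)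
              ((a : Fin (T + 1) → A) t))
          = ∑ a0 : A, ∑ a' : Fin T → A,
              init s0 * (π s0 a0 * trajProb (P s0 a0) P π T s' a') *
                (R s0 a0 + ∑ t : Fin T, R (s' t.castSucc) (a' t)) := by
      intro s'
      rw [sum_pi_fin_succ]
      apply Finset.sum_congr rfl
      intro a0 _
      apply Finset.sum_congr rfl
      intro a' _
      rw [trajProb_cons, reward_cons]
    simp only [step]
    rw [Finset.sum_comm]
    have hinner : ∀ a0 : A,
        (∑ s' : Fin (T + 1) → S, ∑ a' : Fin T → A,
            init s0 * (π s0 a0 * trajProb (P s0 a0) P π T s' a') *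
              (R s0 a0 + ∑ t : Fin T, R (s' t.castSucc) (a' t)))
          = init s0 * (π s0 a0 * (R s0 a0 + ∑ s1, P s0 a0 s1 * Vrem π P R T s1)) := by
      intro a0
      have expand : ∀ (s' : Fin (T + 1) → S) (a' : Fin T → A),
          init s0 * (π s0 a0 * trajProb (P s0 a0) P π T s' a') *
              (R s0 a0 + ∑ t : Fin T, R (s' t.castSucc) (a' t))
            = init s0 * π s0 a0 *
                (R s0 a0 * trajProb (P s0 a0) P π T s' a'
                  + trajProb (P s0 a0) P π T s' a' * ∑ t : Fin T, R (s' t.castSucc) (a' t)) := by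
        intro s' a'; ring
      simp only [expand]
      simp only [← Finset.mul_sum]
      simp only [Finset.sum_add_distrib]
      simp only [← Finset.mul_sum]
      rw [traj_mass P hP1 π hπ1 T (P s0 a0), hP1, ih (P s0 a0)]
      ring
    rw [Finset.sum_congr rfl (fun a0 _ => hinner a0), ← Finset.mul_sum]
    rfl

lemma Vrem_mix_eq {S A : Type*} [Fintype S] [Fintype A] [Nonempty A]
    (P : S → A → S → ℝ) (R : S → A → ℝ)
    (πe πb : S → A → ℝ) (hπe1 : ∀ s, ∑ a, πe s a = 1) (hπb1 : ∀ s, ∑ a, πb s a = 1)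
    (θ : S → Bool) (T : ℕ)
    (hirrel : ∀ s, θ s = false → ∀ k < T, ∀ a a', Qrem πe P R k s a = Qrem πe P R k s a') :
    ∀ k ≤ T, Vrem (fun s a => if θ s then πe s a else πb s a) P R k
      = Vrem πe P R k := by
  intro k
  induction k with
  | zero => intro _; rfl
  | succ k ih =>
    intro hk
    funext s
    have hV : Vrem (fun s a => if θ s then πe s a else πb s a) P R k = Vrem πe P R k :=
      ih (le_of_lt (Nat.lt_of_succ_le hk))
    show (∑ a, (if θ s then πe s a else πb s a) *
        (R s a + ∑ s', P s a s' *
          Vrem (fun s a => if θ s then πe s a else πb s a) P R k s'))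
      = ∑ a, πe s a * (R s a + ∑ s', P s a s' * Vrem πe P R k s')
    rw [hV]
    by_cases hθ : θ s
    · simp only [hθ, if_true]
    · have hθ' : θ s = false := by simpa using hθ
      have hconst := hirrel s hθ' k (Nat.lt_of_lt_of_le (Nat.lt_of_succ_le hk) le_rfl) 
      set a0 : A := Classical.arbitrary A
      have hq : ∀ a : A, R s a + ∑ s', P s a s' * Vrem πe P R k s' = Qrem πe P R k s a0 := by
        intro a; exact hconst a a0
      simp only [hq]
      rw [← Finset.sum_mul, ← Finset.sum_mul]
      have h1 : (∑ i : A, if θ s = true then πe s i else πb s i) = 1 := by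
        simp [hθ', hπb1]
      rw [h1, hπe1]

lemma trajProb_osiris {S A : Type*} (init : S → ℝ) (P : S → A → S → ℝ)
    (πe πb : S → A → ℝ) (hπb0 : ∀ s a, 0 < πb s a) (θ : S → Bool)
    (T : ℕ) (s : Fin (T + 1) → S) (a : Fin T → A) :
    trajProb init P πb T s a *
        ∏ t : Fin T,
          (if θ (s t.castSucc) then πe (s t.castSucc) (a t) / πb (s t.castSucc) (a t) else 1)
      = trajProb init P (fun s a => if θ s then πe s a else πb s a) T s a := by
  unfold trajProb
  rw [mul_assoc, ← Finset.prod_mul_distrib]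
  congr 1
  apply Finset.prod_congr rfl
  intro t _
  have hne : πb (s t.castSucc) (a t) ≠ 0 := (hπb0 _ _).ne'
  by_cases hθ : θ (s t.castSucc)
  · simp only [hθ, if_true]
    field_simp
  · simp [hθ]


/-- Unbiasedness of OSIRIS with the true relevance mapping: if the return-to-go
`Q^{π_e}(s,·)` is constant in the action for every irrelevant state (`θ s = false`)
at every horizon, then `E_{τ∼π_b}[g(τ) ∏_t ρ_t(τ)^{θ(s_t)}] = V^{π_e} = E_{τ∼π_e}[g(τ)]`,
where `g(τ)` is the sum of rewards along `τ`. -/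
theorem osiris_unbiased {S A : Type*} [Fintype S] [Fintype A]
    [Nonempty S] [Nonempty A] (T : ℕ)
    (init : S → ℝ) (hinit0 : ∀ s, 0 ≤ init s) (hinit1 : ∑ s, init s = 1)
    (P : S → A → S → ℝ) (hP0 : ∀ s a s', 0 ≤ P s a s') (hP1 : ∀ s a, ∑ s', P s a s' = 1)
    (R : S → A → ℝ)
    (πe πb : S → A → ℝ)
    (hπe0 : ∀ s a, 0 ≤ πe s a) (hπe1 : ∀ s, ∑ a, πe s a = 1)
    (hπb0 : ∀ s a, 0 < πb s a) (hπb1 : ∀ s, ∑ a, πb s a = 1)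
    (θ : S → Bool)
    (hirrel : ∀ s, θ s = false → ∀ k < T, ∀ a a', Qrem πe P R k s a = Qrem πe P R k s a') :
    ∑ s : Fin (T + 1) → S, ∑ a : Fin T → A,
        trajProb init P πb T s a *
          ((∑ t : Fin T, R (s t.castSucc) (a t)) *
            ∏ t : Fin T,
              (if θ (s t.castSucc) then πe (s t.castSucc) (a t) / πb (s t.castSucc) (a t)
               else 1))
      = ∑ s : Fin (T + 1) → S, ∑ a : Fin T → A,
          trajProb init P πe T s a * ∑ t : Fin T, R (s t.castSucc) (a t) := by
  set πm : S → A → ℝ := fun s a => if θ s then πe s a else πb s a with hπm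
  have hπm1 : ∀ s, ∑ a, πm s a = 1 := by
    intro s
    by_cases hθ : θ s <;> simp [hπm, hθ, hπe1, hπb1]
  have key : ∀ (s : Fin (T + 1) → S) (a : Fin T → A),
      trajProb init P πb T s a *
          ((∑ t : Fin T, R (s t.castSucc) (a t)) *
            ∏ t : Fin T,
              (if θ (s t.castSucc) then πe (s t.castSucc) (a t) / πb (s t.castSucc) (a t)
               else 1))
        = trajProb init P πm T s a * ∑ t : Fin T, R (s t.castSucc) (a t) := by
    intro s a
    rw [mul_comm (∑ t : Fin T, R (s t.castSucc) (a t)) _, ← mul_assoc,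
      trajProb_osiris init P πe πb hπb0 θ T s a]
  simp only [key]
  rw [traj_exp P hP1 πm hπm1 R T init, traj_exp P hP1 πe hπe1 R T init]
  apply Finset.sum_congr rfl
  intro s0 _
  rw [Vrem_mix_eq P R πe πb hπe1 hπb1 θ T hirrel T le_rfl]
end
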